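/- Let T : X → X be nonexpansive and super-regular, with x_T ∈ X the point such that for every s > 0 the iterates Tⁿ converge uniformly on B_s(0) to the constant x_T. Then for all ε > 0 and s > 0 there exist δ > 0 and an integer n₀ ≥ 2 such that for every nonexpansive map T₁ : X → X with ρ(T₁, T) < δ, every integer n ≥ n₀ and every x ∈ X with ‖x‖ ≤ s, one has ‖T₁ⁿx − x_T‖ < ε. -/

import Mathlib

open RealInnerProductSpace Filter

variable {X : Type*} [NormedAddCommGroup X] [InnerProductSpace ℝ X] [CompleteSpace X]

/-- `T` is nonexpansive. -/
def Nonexpansive (T : X → X) : Prop := ∀ x y : X, ‖T x - T y‖ ≤ ‖x - y‖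

/-- `T` is firmly nonexpansive. -/
def FirmlyNonexpansive (T : X → X) : Prop :=
  ∀ x y : X, ‖T x - T y‖ ^ 2 ≤ ⟪x - y, T x - T y⟫

/-- `‖T₁ - T₂‖ₙ = sup_{‖x‖ ≤ n} ‖T₁ x - T₂ x‖`. -/
noncomputable def ballSup (T₁ T₂ : X → X) (n : ℕ) : ℝ :=
  sSup {r : ℝ | ∃ x : X, ‖x‖ ≤ (n : ℝ) ∧ r = ‖T₁ x - T₂ x‖}

/-- The metric `ρ` on nonexpansive maps. -/
noncomputable def rho (T₁ T₂ : X → X) : ℝ :=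
  ∑' n : ℕ, (1 / 2 ^ (n + 1)) *
    (ballSup T₁ T₂ (n + 1) / (1 + ballSup T₁ T₂ (n + 1)))

/-- The metric `ρ̂` on firmly nonexpansive maps: `ρ̂(T₁,T₂) = ρ(2T₁ - Id, 2T₂ - Id)`. -/
noncomputable def rhoHat (T₁ T₂ : X → X) : ℝ :=
  rho (fun x => (2 : ℝ) • T₁ x - x) (fun x => (2 : ℝ) • T₂ x - x)

/-- `T` is super-regular with limit point `xT`. -/
def SuperRegularAt (T : X → X) (xT : X) : Prop :=
  ∀ s : ℝ, 0 < s → ∀ ε : ℝ, 0 < ε → ∃ N : ℕ, ∀ n ≥ N, ∀ x : X, ‖x‖ ≤ s → ‖T^[n] x - xT‖ < ε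

/-- `T` is super-regular. -/
def SuperRegular (T : X → X) : Prop := ∃ xT : X, SuperRegularAt T xT

/-- `T` is a (Banach) contraction. -/
def Contraction (T : X → X) : Prop :=
  ∃ l : ℝ, 0 ≤ l ∧ l < 1 ∧ ∀ x y : X, ‖T x - T y‖ ≤ l * ‖x - y‖

omit [InnerProductSpace ℝ X] [CompleteSpace X] in
lemma Nonexpansive.iterate' {T : X → X} (hT : Nonexpansive T) (n : ℕ) :
    Nonexpansive (T^[n]) := by
  induction n with
  | zero => intro x y; simp
  | succ k ih =>
      intro x y
      rw [Function.iterate_succ_apply', Function.iterate_succ_apply']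
      exact (hT _ _).trans (ih x y)


/-- stability of iterate convergence near a super-regular nonexpansive map. -/
theorem superRegular_stability (T : X → X) (hT : Nonexpansive T) (xT : X)
    (hsr : SuperRegularAt T xT) (ε s : ℝ) (hε : 0 < ε) (hs : 0 < s) :
    ∃ (δ : ℝ) (n₀ : ℕ), 0 < δ ∧ 2 ≤ n₀ ∧
      ∀ T₁ : X → X, Nonexpansive T₁ → rho T₁ T < δ →
        ∀ n ≥ n₀, ∀ x : X, ‖x‖ ≤ s → ‖T₁^[n] x - xT‖ < ε := by
  have tri : ∀ a b c : X, ‖a - c‖ ≤ ‖a - b‖ + ‖b - c‖ := by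
    intro a b c
    calc ‖a - c‖ = ‖(a - b) + (b - c)‖ := by rw [sub_add_sub_cancel]
      _ ≤ ‖a - b‖ + ‖b - c‖ := norm_add_le _ _
  -- a bound C for the T-orbit of 0, with ‖xT‖ ≤ C
  obtain ⟨N₀, hN₀⟩ := hsr 1 one_pos 1 one_pos
  obtain ⟨C, hC0, hCxT, hCorb⟩ :
      ∃ C : ℝ, 0 ≤ C ∧ ‖xT‖ ≤ C ∧ ∀ j : ℕ, ‖T^[j] (0 : X)‖ ≤ C := by
    refine ⟨max (‖xT‖ + 1)
      ((Finset.range (N₀ + 1)).sup' ⟨0, by simp⟩ fun j => ‖T^[j] (0 : X)‖), ?_, ?_, ?_⟩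
    · exact le_max_of_le_left (by positivity)
    · exact le_max_of_le_left (by linarith [norm_nonneg xT])
    · intro j
      rcases le_or_gt j N₀ with hj | hj
      · exact le_max_of_le_right (Finset.le_sup' (fun j => ‖T^[j] (0 : X)‖) (Finset.mem_range_succ_iff.mpr hj))
      · have h1 := hN₀ j hj.le 0 (by simp)
        have h2 := norm_sub_norm_le (T^[j] (0 : X)) xT
        exact le_max_of_le_left (by linarith)
  set R : ℝ := s + C + ε with hRdef
  have hRpos : 0 < R := by positivity
  obtain ⟨N₁, hN₁⟩ := hsr R hRpos (ε / 2) (by linarith)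
  set n₀ : ℕ := max N₁ 2 with hn₀def
  have hn₀2 : 2 ≤ n₀ := le_max_right _ _
  have hn₀pos : (0 : ℝ) < n₀ := by
    have : (2 : ℕ) ≤ n₀ := hn₀2
    exact_mod_cast Nat.lt_of_lt_of_le Nat.zero_lt_two this
  set γ : ℝ := ε / (2 * n₀) with hγdef
  have hγpos : 0 < γ := by positivity
  have hn₀γ : (n₀ : ℝ) * γ = ε / 2 := by
    field_simp [hγdef]
    have := div_mul_cancel₀ ε (ne_of_gt (by positivity : (0:ℝ) < 2 * n₀))
    rw [← hγdef] at this
    linarith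
  set r : ℝ := R + C + ε / 2 with hrdef
  set k : ℕ := ⌈r⌉₊ with hkdef
  have hrk : r ≤ (k : ℝ) + 1 := (Nat.le_ceil r).trans (by linarith)
  set γ' : ℝ := min γ 1 with hγ'def
  have hγ'pos : 0 < γ' := lt_min hγpos one_pos
  refine ⟨(1 / 2 ^ (k + 1)) * (γ' / (1 + γ')), n₀, by positivity, hn₀2, ?_⟩
  intro T₁ hT₁ hρ n hn x hx
  -- ballSup facts
  have hbdd : ∀ m : ℕ,
      BddAbove {ρ : ℝ | ∃ z : X, ‖z‖ ≤ (m : ℝ) ∧ ρ = ‖T₁ z - T z‖} := by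
    intro m
    refine ⟨2 * m + ‖T₁ 0 - T 0‖, ?_⟩
    rintro ρ ⟨z, hz, rfl⟩
    have h1 := tri (T₁ z) (T₁ 0) (T z)
    have h2 := tri (T₁ 0) (T 0) (T z)
    have h3 := hT₁ z 0
    have h4 := hT 0 z
    simp only [sub_zero, zero_sub, norm_neg] at h3 h4
    linarith
  have hle : ∀ m : ℕ, ∀ z : X, ‖z‖ ≤ (m : ℝ) → ‖T₁ z - T z‖ ≤ ballSup T₁ T m :=
    fun m z hz => le_csSup (hbdd m) ⟨z, hz, rfl⟩
  have hnn : ∀ m : ℕ, 0 ≤ ballSup T₁ T m :=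
    fun m => (norm_nonneg _).trans (hle m 0 (by simp))
  set f : ℕ → ℝ := fun n =>
    (1 / 2 ^ (n + 1)) * (ballSup T₁ T (n + 1) / (1 + ballSup T₁ T (n + 1))) with hfdef
  have hfnn : ∀ j, 0 ≤ f j := by
    intro j
    have hb := hnn (j + 1)
    exact mul_nonneg (by positivity) (div_nonneg hb (by linarith))
  have hfle : ∀ j, f j ≤ (1 / 2) * (1 / 2 : ℝ) ^ j := by
    intro j
    have hb := hnn (j + 1)
    have h1 : ballSup T₁ T (j + 1) / (1 + ballSup T₁ T (j + 1)) ≤ 1 := by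
      rw [div_le_one (by linarith)]; linarith
    calc f j ≤ (1 / 2 ^ (j + 1)) * 1 :=
          mul_le_mul_of_nonneg_left h1 (by positivity)
      _ = (1 / 2) * (1 / 2 : ℝ) ^ j := by
          rw [mul_one, pow_succ]
          rw [one_div_pow, one_div, one_div, mul_inv, one_div, mul_comm]
  have hsum : Summable f :=
    Summable.of_nonneg_of_le hfnn hfle (summable_geometric_two.mul_left _)
  have hρ' : f k < (1 / 2 ^ (k + 1)) * (γ' / (1 + γ')) := by
    have h1 : f k ≤ rho T₁ T := Summable.le_tsum hsum k fun j _ => hfnn j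
    exact lt_of_le_of_lt h1 hρ
  have hbk : ballSup T₁ T (k + 1) < γ' := by
    by_contra h
    push_neg at h
    have hb := hnn (k + 1)
    have h2 : γ' / (1 + γ') ≤ ballSup T₁ T (k + 1) / (1 + ballSup T₁ T (k + 1)) := by
      rw [div_le_div_iff₀ (by linarith) (by linarith)]
      nlinarith
    have h3 : (1 / 2 ^ (k + 1) : ℝ) * (γ' / (1 + γ')) ≤ f k :=
      mul_le_mul_of_nonneg_left h2 (by positivity)
    linarith
  have hb : ∀ z : X, ‖z‖ ≤ r → ‖T₁ z - T z‖ ≤ γ := by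
    intro z hz
    have h1 : ‖z‖ ≤ ((k + 1 : ℕ) : ℝ) := by push_cast; linarith
    exact ((hle (k + 1) z h1).trans hbk.le).trans (min_le_left _ _)
  -- orbit bound for T
  have hTorb : ∀ (j : ℕ) (y : X), ‖T^[j] y‖ ≤ ‖y‖ + C := by
    intro j y
    have h1 := hT.iterate' j y 0
    have h2 := hCorb j
    have h3 := norm_sub_norm_le (T^[j] y) (T^[j] 0)
    simp only [sub_zero] at h1
    linarith
  -- tracking for n₀ steps
  have key : ∀ j, j ≤ n₀ → ∀ y : X, ‖y‖ ≤ R → ‖T₁^[j] y - T^[j] y‖ ≤ j * γ := by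
    intro j
    induction j with
    | zero => intro _ y _; simp
    | succ i ih =>
        intro hi y hy
        have hii : i ≤ n₀ := by omega
        have h1 := ih hii y hy
        have hiγ : (i : ℝ) * γ ≤ (n₀ : ℝ) * γ := by
          apply mul_le_mul_of_nonneg_right _ hγpos.le
          exact_mod_cast hii
        have hT1norm : ‖T₁^[i] y‖ ≤ r := by
          have h2 := hTorb i y
          have h3 := norm_sub_norm_le (T₁^[i] y) (T^[i] y)
          rw [hrdef]
          linarith [hn₀γ]
        rw [Function.iterate_succ_apply', Function.iterate_succ_apply']
        have h4 := tri (T₁ (T₁^[i] y)) (T (T₁^[i] y)) (T (T^[i] y))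
        have h5 := hb _ hT1norm
        have h6 := (hT (T₁^[i] y) (T^[i] y)).trans h1
        push_cast
        linarith
  -- the key step: points of B_R return ε-close to xT after n₀ steps of T₁
  have hN₁n₀ : N₁ ≤ n₀ := le_max_left _ _
  have step : ∀ y : X, ‖y‖ ≤ R → ‖T₁^[n₀] y - xT‖ < ε := by
    intro y hy
    have h1 := key n₀ le_rfl y hy
    have h2 := hN₁ n₀ hN₁n₀ y hy
    have h3 := tri (T₁^[n₀] y) (T^[n₀] y) xT
    linarith [hn₀γ]
  -- main strong induction
  have main : ∀ n, n₀ ≤ n → ‖T₁^[n] x - xT‖ < ε := by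
    intro n
    induction n using Nat.strong_induction_on with
    | _ n ih =>
      intro hn
      obtain ⟨m, rfl⟩ : ∃ m, n = n₀ + m := ⟨n - n₀, by omega⟩
      have hxR : ‖x‖ ≤ R := by linarith
      have hy : ‖T₁^[m] x‖ ≤ R := by
        rcases lt_or_ge m n₀ with hm | hm
        · have h1 := key m hm.le x hxR
          have h2 := hTorb m x
          have h3 := norm_sub_norm_le (T₁^[m] x) (T^[m] x)
          have hmγ : (m : ℝ) * γ ≤ (n₀ : ℝ) * γ := by
            apply mul_le_mul_of_nonneg_right _ hγpos.le
            exact_mod_cast hm.le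
          rw [hRdef]
          linarith [hn₀γ]
        · have hlt : m < n₀ + m := by omega
          have h1 := ih m hlt hm
          have h2 := norm_sub_norm_le (T₁^[m] x) xT
          linarith
      have h := step (T₁^[m] x) hy
      rwa [← Function.iterate_add_apply] at h
  exact main n hn
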